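/- arXiv:2012.06394 — 3 statements merged into one kernel-verified Lean document; each statement's English description precedes it below -/
import Mathlib

section
/- Let (x̃,ỹ) ∈ G with x̃ not equal to any of the points x^0,…,x^n. Let r be the smallest index j with x̃_j < u, let s be the largest index j with x̃_j > ℓ, let p be the number of coordinates of x̃ equal to u, and let b be the number of coordinates of x̃ equal to ℓ. Then (x̃,ỹ) satisfies a valid core inequality β₀ + Σ_{j=1}^n β_j x_j + β′ y ≥ 0 exactly if and only if (x^j, m(x^j)) satisfies the inequality exactly for every j ∈ {p,…,n−b} and β_r = β_{r+1} = … = β_s. -/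
open Finset

/-- The symmetric multilinear polynomial `m(x) = ∑_{i=2}^n c_i ∑_{|J|=i} ∏_{j∈J} x_j`. -/
noncomputable def mPoly (n : ℕ) (c : ℕ → ℝ) (x : Fin n → ℝ) : ℝ :=
  ∑ i ∈ Finset.Icc 2 n, c i *
    ∑ J ∈ Finset.powersetCard i (Finset.univ : Finset (Fin n)), ∏ j ∈ J, x j

/-- The box `X = [ℓ,u]^n`. -/
def Xbox (n : ℕ) (ℓ u : ℝ) : Set (Fin n → ℝ) :=
  {x | ∀ j, x j ∈ Set.Icc ℓ u}

/-- The graph `G = {(x,y) : x ∈ X, y = m(x)}`. -/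
def Gset (n : ℕ) (ℓ u : ℝ) (c : ℕ → ℝ) : Set ((Fin n → ℝ) × ℝ) :=
  {p | p.1 ∈ Xbox n ℓ u ∧ p.2 = mPoly n c p.1}

/-- The point `x^k` whose first `k` coordinates are `u` and remaining ones are `ℓ`. -/
def xpt (n : ℕ) (ℓ u : ℝ) (k : ℕ) : Fin n → ℝ :=
  fun j => if (j : ℕ) < k then u else ℓ

/-- `m(x^k)`. -/
noncomputable def mval (n : ℕ) (ℓ u : ℝ) (c : ℕ → ℝ) (k : ℕ) : ℝ :=
  mPoly n c (xpt n ℓ u k)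

/-- `L_k(β₀,β) = β₀ + u ∑_{j=1}^k β_j + ℓ ∑_{j=k+1}^n β_j`. -/
noncomputable def Lk (n : ℕ) (ℓ u : ℝ) (β₀ : ℝ) (β : Fin n → ℝ) (k : ℕ) : ℝ :=
  β₀ + u * ∑ j ∈ Finset.univ.filter (fun j : Fin n => (j : ℕ) < k), β j
     + ℓ * ∑ j ∈ Finset.univ.filter (fun j : Fin n => k ≤ (j : ℕ)), β j

/-- The left-hand side `β₀ + ∑_j β_j x_j + β′ y` of an inequality, at the point `p = (x,y)`. -/
noncomputable def ineqLhs (n : ℕ) (β₀ : ℝ) (β : Fin n → ℝ) (β' : ℝ)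
    (p : (Fin n → ℝ) × ℝ) : ℝ :=
  β₀ + ∑ j, β j * p.1 j + β' * p.2

/-- A core inequality: `β′ ∈ {1,-1}` and nondecreasing coefficients `β₁ ≤ … ≤ βₙ`. -/
def IsCore (n : ℕ) (β : Fin n → ℝ) (β' : ℝ) : Prop :=
  (β' = 1 ∨ β' = -1) ∧ Monotone β

/-- Validity of the inequality `β₀ + ∑_j β_j x_j + β′ y ≥ 0` on `conv(G)`. -/
def IsValid (n : ℕ) (ℓ u : ℝ) (c : ℕ → ℝ) (β₀ : ℝ) (β : Fin n → ℝ) (β' : ℝ) : Prop :=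
  ∀ p ∈ convexHull ℝ (Gset n ℓ u c), 0 ≤ ineqLhs n β₀ β β' p

/-- The point `p` satisfies the inequality exactly (with equality). -/
def ExactAt (n : ℕ) (β₀ : ℝ) (β : Fin n → ℝ) (β' : ℝ) (p : (Fin n → ℝ) × ℝ) : Prop :=
  ineqLhs n β₀ β β' p = 0

/-- Facet-defining: there are `n+1` affinely independent points of `conv(G)`
satisfying the inequality exactly. -/
def IsFacet (n : ℕ) (ℓ u : ℝ) (c : ℕ → ℝ) (β₀ : ℝ) (β : Fin n → ℝ) (β' : ℝ) : Prop :=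
  ∃ pts : Fin (n + 1) → (Fin n → ℝ) × ℝ,
    AffineIndependent ℝ pts ∧
    ∀ i, pts i ∈ convexHull ℝ (Gset n ℓ u c) ∧ ExactAt n β₀ β β' (pts i)

/-- The point `(x^k, m(x^k))` of `G`. -/
noncomputable def vtx (n : ℕ) (ℓ u : ℝ) (c : ℕ → ℝ) (k : ℕ) : (Fin n → ℝ) × ℝ :=
  (xpt n ℓ u k, mval n ℓ u c k)


lemma card_filter_lt (n k : ℕ) (h : k ≤ n) :
    #(univ.filter fun j : Fin n => (j:ℕ) < k) = k := by
  have himg : (univ.filter fun j : Fin n => (j:ℕ) < k).image Fin.val = Finset.range k := by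
    ext a
    simp only [mem_image, mem_filter, mem_univ, true_and, mem_range]
    constructor
    · rintro ⟨j, hj, rfl⟩; exact hj
    · intro ha; exact ⟨⟨a, lt_of_lt_of_le ha h⟩, ha, rfl⟩
  have := Finset.card_image_of_injective (univ.filter fun j : Fin n => (j:ℕ) < k) Fin.val_injective
  rw [himg, Finset.card_range] at this
  omega

-- symmetry of mPoly
lemma mPoly_comp_perm (n : ℕ) (c : ℕ → ℝ) (σ : Equiv.Perm (Fin n)) (x : Fin n → ℝ) :
    mPoly n c (x ∘ σ) = mPoly n c x := by
  unfold mPoly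
  refine Finset.sum_congr rfl fun i _ => ?_
  congr 1
  refine Finset.sum_nbij' (fun J => J.image σ) (fun J => J.image σ.symm) ?_ ?_ ?_ ?_ ?_
  · intro J hJ
    simp only [Finset.mem_powersetCard] at hJ ⊢
    exact ⟨Finset.subset_univ _, by rw [Finset.card_image_of_injective _ σ.injective, hJ.2]⟩
  · intro J hJ
    simp only [Finset.mem_powersetCard] at hJ ⊢
    exact ⟨Finset.subset_univ _, by rw [Finset.card_image_of_injective _ σ.symm.injective, hJ.2]⟩
  · intro J _; simp [Finset.image_image]
  · intro J _; simp [Finset.image_image]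
  · intro J _
    rw [Finset.prod_image (fun a _ b _ h => σ.injective h)]
    rfl

lemma mPoly_update_affine (n : ℕ) (c : ℕ → ℝ) (x : Fin n → ℝ) (i : Fin n) (t A B : ℝ) :
    mPoly n c (Function.update x i (t*A + (1-t)*B)) =
      t * mPoly n c (Function.update x i A) + (1-t) * mPoly n c (Function.update x i B) := by
  unfold mPoly
  rw [Finset.mul_sum, Finset.mul_sum, ← Finset.sum_add_distrib]
  refine Finset.sum_congr rfl fun m _ => ?_
  rw [Finset.mul_sum, Finset.mul_sum, Finset.mul_sum, Finset.mul_sum, Finset.mul_sum,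
    ← Finset.sum_add_distrib]
  refine Finset.sum_congr rfl fun J _ => ?_
  by_cases hiJ : i ∈ J
  · rw [Finset.prod_update_of_mem hiJ, Finset.prod_update_of_mem hiJ,
      Finset.prod_update_of_mem hiJ]
    ring
  · rw [Finset.prod_update_of_notMem hiJ, Finset.prod_update_of_notMem hiJ,
      Finset.prod_update_of_notMem hiJ]
    ring

/-- Setting coordinates in `T` to `u` (on `S`) or `ℓ` (off `S`). -/
def crn (n : ℕ) (ℓ u : ℝ) (T S : Finset (Fin n)) (x : Fin n → ℝ) : Fin n → ℝ :=
  fun j => if j ∈ T then (if j ∈ S then u else ℓ) else x j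

lemma crn_empty (n : ℕ) (ℓ u : ℝ) (S : Finset (Fin n)) (x : Fin n → ℝ) :
    crn n ℓ u ∅ S x = x := by
  funext j; simp [crn]

lemma crn_update_u (n : ℕ) (ℓ u : ℝ) (T S : Finset (Fin n)) (x : Fin n → ℝ)
    (a : Fin n) (ha : a ∉ T) :
    crn n ℓ u T S (Function.update x a u) = crn n ℓ u (insert a T) (insert a S) x := by
  funext j
  rcases eq_or_ne j a with rfl | hj
  · simp [crn, ha]
  · simp [crn, Function.update_of_ne hj, hj]

lemma crn_update_l (n : ℕ) (ℓ u : ℝ) (T S : Finset (Fin n)) (x : Fin n → ℝ)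
    (a : Fin n) (ha : a ∉ T) (haS : a ∉ S) :
    crn n ℓ u T S (Function.update x a ℓ) = crn n ℓ u (insert a T) S x := by
  funext j
  rcases eq_or_ne j a with rfl | hj
  · simp [crn, ha, haS]
  · simp [crn, Function.update_of_ne hj, hj]

/-- The affinity hypothesis on `h`. -/
def Affine1 (n : ℕ) (ℓ u : ℝ) (h : (Fin n → ℝ) → ℝ) : Prop :=
  ∀ (x : Fin n → ℝ) (i : Fin n) (t : ℝ),
    h (Function.update x i (t*u + (1-t)*ℓ)) =
      t * h (Function.update x i u) + (1-t) * h (Function.update x i ℓ)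

lemma h_decomp (n : ℕ) (ℓ u : ℝ) (hne : u ≠ ℓ) (h : (Fin n → ℝ) → ℝ)
    (haff : Affine1 n ℓ u h) (x : Fin n → ℝ) (a : Fin n) :
    h x = (x a - ℓ)/(u - ℓ) * h (Function.update x a u)
        + (1 - (x a - ℓ)/(u - ℓ)) * h (Function.update x a ℓ) := by
  set t := (x a - ℓ)/(u - ℓ) with ht
  have hx : x a = t * u + (1 - t) * ℓ := by
    have hmul : t * (u - ℓ) = x a - ℓ := by rw [ht]; exact div_mul_cancel₀ _ (sub_ne_zero.2 hne)
    linear_combination -hmul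
  calc h x = h (Function.update x a (t*u + (1-t)*ℓ)) := by rw [← hx, Function.update_eq_self]
    _ = _ := haff x a t

lemma expand_zero (n : ℕ) (ℓ u : ℝ) (hne : u ≠ ℓ) (h : (Fin n → ℝ) → ℝ)
    (haff : Affine1 n ℓ u h) (T : Finset (Fin n)) :
    ∀ (x : Fin n → ℝ), (∀ S ⊆ T, h (crn n ℓ u T S x) = 0) → h x = 0 := by
  induction T using Finset.induction_on with
  | empty => intro x hc; simpa [crn_empty] using hc ∅ (by simp)
  | @insert a T ha ih =>
    intro x hc
    rw [h_decomp n ℓ u hne h haff x a]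
    have h1 : h (Function.update x a u) = 0 := by
      refine ih _ fun S hS => ?_
      rw [crn_update_u n ℓ u T S x a ha]
      exact hc (insert a S) (Finset.insert_subset_insert a hS)
    have h2 : h (Function.update x a ℓ) = 0 := by
      refine ih _ fun S hS => ?_
      rw [crn_update_l n ℓ u T S x a ha (fun hmem => ha (hS hmem))]
      exact hc S (hS.trans (Finset.subset_insert a T))
    rw [h1, h2]; ring

lemma expand_nonneg (n : ℕ) (ℓ u : ℝ) (hlt : ℓ < u) (h : (Fin n → ℝ) → ℝ)
    (haff : Affine1 n ℓ u h) (T : Finset (Fin n)) :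
    ∀ (x : Fin n → ℝ), (∀ i ∈ T, ℓ ≤ x i ∧ x i ≤ u) →
      (∀ S ⊆ T, 0 ≤ h (crn n ℓ u T S x)) → 0 ≤ h x := by
  induction T using Finset.induction_on with
  | empty => intro x _ hc; simpa [crn_empty] using hc ∅ (by simp)
  | @insert a T ha ih =>
    intro x hx hc
    rw [h_decomp n ℓ u (ne_of_gt hlt) h haff x a]
    have hbound := hx a (Finset.mem_insert_self a T)
    have ht0 : (0:ℝ) ≤ (x a - ℓ)/(u - ℓ) := by
      apply div_nonneg <;> linarith [hbound.1]
    have ht1 : (x a - ℓ)/(u - ℓ) ≤ 1 := by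
      rw [div_le_one (by linarith)]; linarith [hbound.2]
    have h1 : 0 ≤ h (Function.update x a u) := by
      refine ih _ (fun i hi => ?_) fun S hS => ?_
      · rw [Function.update_of_ne (by rintro rfl; exact ha hi)]
        exact hx i (Finset.mem_insert_of_mem hi)
      · rw [crn_update_u n ℓ u T S x a ha]
        exact hc (insert a S) (Finset.insert_subset_insert a hS)
    have h2 : 0 ≤ h (Function.update x a ℓ) := by
      refine ih _ (fun i hi => ?_) fun S hS => ?_
      · rw [Function.update_of_ne (by rintro rfl; exact ha hi)]
        exact hx i (Finset.mem_insert_of_mem hi)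
      · rw [crn_update_l n ℓ u T S x a ha (fun hmem => ha (hS hmem))]
        exact hc S (hS.trans (Finset.subset_insert a T))
    nlinarith

lemma expand_pos (n : ℕ) (ℓ u : ℝ) (hlt : ℓ < u) (h : (Fin n → ℝ) → ℝ)
    (haff : Affine1 n ℓ u h) (T : Finset (Fin n)) :
    ∀ (x : Fin n → ℝ), (∀ i ∈ T, ℓ < x i ∧ x i < u) →
      (∀ S ⊆ T, 0 ≤ h (crn n ℓ u T S x)) → h x = 0 →
      ∀ S ⊆ T, h (crn n ℓ u T S x) = 0 := by
  induction T using Finset.induction_on with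
  | empty =>
    intro x _ _ hx0 S hS
    rw [Finset.subset_empty.mp hS, crn_empty]; exact hx0
  | @insert a T ha ih =>
    intro x hx hc hx0
    have hbound := hx a (Finset.mem_insert_self a T)
    set t := (x a - ℓ)/(u - ℓ) with ht
    have hupos : (0:ℝ) < u - ℓ := by linarith
    have ht0 : (0:ℝ) < t := div_pos (by linarith [hbound.1]) hupos
    have ht1 : t < 1 := by rw [div_lt_one hupos]; linarith [hbound.2]
    have hxmem : ∀ i ∈ T, ℓ < x i ∧ x i < u := fun i hi => hx i (Finset.mem_insert_of_mem hi)
    have hxmem' : ∀ i ∈ T, ℓ ≤ x i ∧ x i ≤ u := fun i hi => ⟨(hxmem i hi).1.le, (hxmem i hi).2.le⟩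
    have hcu : ∀ S ⊆ T, 0 ≤ h (crn n ℓ u T S (Function.update x a u)) := by
      intro S hS
      rw [crn_update_u n ℓ u T S x a ha]
      exact hc (insert a S) (Finset.insert_subset_insert a hS)
    have hcl : ∀ S ⊆ T, 0 ≤ h (crn n ℓ u T S (Function.update x a ℓ)) := by
      intro S hS
      rw [crn_update_l n ℓ u T S x a ha (fun hmem => ha (hS hmem))]
      exact hc S (hS.trans (Finset.subset_insert a T))
    have hbd : ∀ (v : ℝ) (i : Fin n), i ∈ T → ℓ ≤ Function.update x a v i ∧ Function.update x a v i ≤ u := by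
      intro v i hi
      rw [Function.update_of_ne (by rintro rfl; exact ha hi)]
      exact hxmem' i hi
    have h1 : 0 ≤ h (Function.update x a u) :=
      expand_nonneg n ℓ u hlt h haff T _ (hbd u) hcu
    have h2 : 0 ≤ h (Function.update x a ℓ) :=
      expand_nonneg n ℓ u hlt h haff T _ (hbd ℓ) hcl
    have hdec := h_decomp n ℓ u (ne_of_gt hlt) h haff x a
    rw [hx0] at hdec
    have h1' : h (Function.update x a u) = 0 := by nlinarith
    have h2' : h (Function.update x a ℓ) = 0 := by nlinarith
    have ihu := ih _ (fun i hi => by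
      rw [Function.update_of_ne (by rintro rfl; exact ha hi)]; exact hxmem i hi) hcu h1'
    have ihl := ih _ (fun i hi => by
      rw [Function.update_of_ne (by rintro rfl; exact ha hi)]; exact hxmem i hi) hcl h2'
    intro S hS
    by_cases haS : a ∈ S
    · have hS' : S.erase a ⊆ T := by
        intro i hi
        rcases Finset.mem_insert.mp (hS (Finset.mem_of_mem_erase hi)) with rfl | h
        · exact absurd hi (Finset.notMem_erase i S)
        · exact h
      have := ihu (S.erase a) hS'
      rwa [crn_update_u n ℓ u T _ x a ha, Finset.insert_erase haS] at this
    · have hS' : S ⊆ T := fun i hi => by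
        rcases Finset.mem_insert.mp (hS hi) with rfl | h
        · exact absurd hi haS
        · exact h
      have := ihl S hS'
      rwa [crn_update_l n ℓ u T S x a ha haS] at this

/-- Indicator point of a set `A`: `u` on `A`, `ℓ` elsewhere. -/
def zp (n : ℕ) (ℓ u : ℝ) (A : Finset (Fin n)) : Fin n → ℝ :=
  fun j => if j ∈ A then u else ℓ

lemma exists_perm_mapsto (n : ℕ) (A B : Finset (Fin n)) (hcard : A.card = B.card) :
    ∃ σ : Equiv.Perm (Fin n), ∀ j, σ j ∈ B ↔ j ∈ A := by
  classical
  have hcard' : Aᶜ.card = Bᶜ.card := by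
    rw [Finset.card_compl, Finset.card_compl, hcard]
  let e1 : {x // x ∈ A} ≃ {x // x ∈ B} := Finset.equivOfCardEq hcard
  let e2 : {x // x ∈ Aᶜ} ≃ {x // x ∈ Bᶜ} := Finset.equivOfCardEq hcard'
  let e2' : {x : Fin n // ¬ x ∈ A} ≃ {x : Fin n // ¬ x ∈ B} :=
    ((Equiv.subtypeEquivRight (fun x => (Finset.mem_compl).symm)).trans e2).trans
      (Equiv.subtypeEquivRight (fun x => Finset.mem_compl))
  refine ⟨(Equiv.sumCompl (· ∈ A)).symm.trans ((e1.sumCongr e2').trans (Equiv.sumCompl (· ∈ B))), ?_⟩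
  intro j
  by_cases hj : j ∈ A
  · rw [Equiv.trans_apply, Equiv.trans_apply, Equiv.sumCompl_symm_apply_of_pos hj]
    simp only [hj, iff_true, Equiv.sumCongr_apply, Sum.map_inl, Equiv.sumCompl_apply_inl]
    exact (e1 ⟨j, hj⟩).2
  · rw [Equiv.trans_apply, Equiv.trans_apply, Equiv.sumCompl_symm_apply_of_neg hj]
    simp only [hj, iff_false, Equiv.sumCongr_apply, Sum.map_inr, Equiv.sumCompl_apply_inr]
    exact (e2' ⟨j, hj⟩).2

lemma zp_comp_perm (n : ℕ) (ℓ u : ℝ) (A B : Finset (Fin n)) (σ : Equiv.Perm (Fin n))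
    (hσ : ∀ j, σ j ∈ B ↔ j ∈ A) : zp n ℓ u B ∘ σ = zp n ℓ u A := by
  funext j
  simp only [Function.comp_apply, zp]
  by_cases hj : j ∈ A
  · rw [if_pos ((hσ j).mpr hj), if_pos hj]
  · rw [if_neg (fun h => hj ((hσ j).mp h)), if_neg hj]

lemma mPoly_zp_card_eq (n : ℕ) (c : ℕ → ℝ) (ℓ u : ℝ) (A B : Finset (Fin n))
    (hcard : A.card = B.card) : mPoly n c (zp n ℓ u A) = mPoly n c (zp n ℓ u B) := by
  obtain ⟨σ, hσ⟩ := exists_perm_mapsto n A B hcard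
  rw [← zp_comp_perm n ℓ u A B σ hσ, mPoly_comp_perm]

lemma sum_beta_zp (n : ℕ) (ℓ u : ℝ) (β : Fin n → ℝ) (A : Finset (Fin n)) :
    ∑ j, β j * zp n ℓ u A j = ℓ * ∑ j, β j + (u - ℓ) * ∑ j ∈ A, β j := by
  have : ∀ j : Fin n, β j * zp n ℓ u A j = ℓ * β j + (if j ∈ A then (u - ℓ) * β j else 0) := by
    intro j
    by_cases hj : j ∈ A <;> simp [zp, hj] <;> ring
  rw [Finset.sum_congr rfl (fun j _ => this j), Finset.sum_add_distrib, ← Finset.mul_sum,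
    Finset.sum_ite_mem, Finset.univ_inter, ← Finset.mul_sum]

noncomputable def hfun (n : ℕ) (ℓ u : ℝ) (c : ℕ → ℝ) (β₀ : ℝ) (β : Fin n → ℝ) (β' : ℝ)
    (x : Fin n → ℝ) : ℝ :=
  β₀ + ∑ j, β j * x j + β' * mPoly n c x

lemma sum_beta_update (n : ℕ) (β : Fin n → ℝ) (x : Fin n → ℝ) (i : Fin n) (a : ℝ) :
    ∑ j, β j * Function.update x i a j = β i * a + ∑ j ∈ Finset.univ \ {i}, β j * x j := by
  have hfn : ∀ j, β j * Function.update x i a j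
      = Function.update (fun j => β j * x j) i (β i * a) j := by
    intro j
    rcases eq_or_ne j i with rfl | hj
    · simp
    · simp [Function.update_of_ne hj]
  rw [Finset.sum_congr rfl fun j _ => hfn j, Finset.sum_update_of_mem (Finset.mem_univ i)]

lemma hfun_affine (n : ℕ) (ℓ u : ℝ) (c : ℕ → ℝ) (β₀ : ℝ) (β : Fin n → ℝ) (β' : ℝ) :
    Affine1 n ℓ u (hfun n ℓ u c β₀ β β') := by
  intro x i t
  unfold hfun
  rw [mPoly_update_affine, sum_beta_update, sum_beta_update, sum_beta_update]
  ring

lemma hfun_zp (n : ℕ) (ℓ u : ℝ) (c : ℕ → ℝ) (β₀ : ℝ) (β : Fin n → ℝ) (β' : ℝ)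
    (A : Finset (Fin n)) :
    hfun n ℓ u c β₀ β β' (zp n ℓ u A) =
      β₀ + (ℓ * ∑ j, β j + (u - ℓ) * ∑ j ∈ A, β j) + β' * mPoly n c (zp n ℓ u A) := by
  unfold hfun
  rw [sum_beta_zp]

lemma hfun_transfer (n : ℕ) (ℓ u : ℝ) (c : ℕ → ℝ) (β₀ : ℝ) (β : Fin n → ℝ) (β' : ℝ)
    (A B : Finset (Fin n)) (hcard : A.card = B.card) (γ : ℝ)
    (hA : ∀ j ∈ A \ B, β j = γ) (hB : ∀ j ∈ B \ A, β j = γ) :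
    hfun n ℓ u c β₀ β β' (zp n ℓ u A) = hfun n ℓ u c β₀ β β' (zp n ℓ u B) := by
  have hm : mPoly n c (zp n ℓ u A) = mPoly n c (zp n ℓ u B) :=
    mPoly_zp_card_eq n c ℓ u A B hcard
  have hsd : (A \ B).card = (B \ A).card := by
    have h1 := Finset.card_inter_add_card_sdiff A B
    have h2 := Finset.card_inter_add_card_sdiff B A
    rw [Finset.inter_comm] at h2
    omega
  have hsumA : ∑ j ∈ A, β j = ∑ j ∈ A ∩ B, β j + (A \ B).card * γ := by
    rw [← Finset.sum_inter_add_sum_sdiff A B β]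
    rw [Finset.sum_congr rfl hA, Finset.sum_const, nsmul_eq_mul]
  have hsumB : ∑ j ∈ B, β j = ∑ j ∈ A ∩ B, β j + (B \ A).card * γ := by
    rw [← Finset.sum_inter_add_sum_sdiff B A β]
    rw [Finset.sum_congr rfl hB, Finset.sum_const, nsmul_eq_mul, Finset.inter_comm]
  rw [hfun_zp, hfun_zp, hm, hsumA, hsumB, hsd]

lemma hfun_swap (n : ℕ) (ℓ u : ℝ) (c : ℕ → ℝ) (β₀ : ℝ) (β : Fin n → ℝ) (β' : ℝ)
    (r s : Fin n) (A : Finset (Fin n)) (hsA : s ∈ A) (hrA : r ∉ A) :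
    hfun n ℓ u c β₀ β β' (zp n ℓ u (insert r (A.erase s))) =
      hfun n ℓ u c β₀ β β' (zp n ℓ u A) + (u - ℓ) * (β r - β s) := by
  have hcard : (insert r (A.erase s)).card = A.card := by
    rw [Finset.card_insert_of_notMem (fun hmem => hrA (Finset.mem_of_mem_erase hmem)),
      Finset.card_erase_of_mem hsA]
    have := Finset.card_pos.mpr ⟨s, hsA⟩
    omega
  have hm : mPoly n c (zp n ℓ u (insert r (A.erase s))) = mPoly n c (zp n ℓ u A) :=
    mPoly_zp_card_eq n c ℓ u _ _ hcard
  have hsum : ∑ j ∈ insert r (A.erase s), β j = β r + ∑ j ∈ A.erase s, β j :=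
    Finset.sum_insert (fun hmem => hrA (Finset.mem_of_mem_erase hmem))
  have hsum2 : ∑ j ∈ A.erase s, β j + β s = ∑ j ∈ A, β j :=
    Finset.sum_erase_add A β hsA
  rw [hfun_zp, hfun_zp, hm, hsum, ← hsum2]
  ring

lemma card_filter_ge (n k : ℕ) (hk : k ≤ n) :
    #(univ.filter fun j : Fin n => k ≤ (j:ℕ)) = n - k := by
  have hneg : (univ.filter fun j : Fin n => k ≤ (j:ℕ))
      = univ.filter fun j : Fin n => ¬ ((j:ℕ) < k) := by
    apply Finset.filter_congr
    intro j _
    simp [not_lt]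
  have := Finset.card_filter_add_card_filter_not
    (s := (univ : Finset (Fin n))) (p := fun j : Fin n => (j:ℕ) < k)
  rw [Finset.card_univ, Fintype.card_fin, card_filter_lt n k hk] at this
  rw [hneg]
  omega


/-- For `(x̃,ỹ) ∈ G` with `x̃` not one of the `x^k`, with `r` the
smallest index with `x̃_j < u`, `s` the largest index with `x̃_j > ℓ`, `p` the number of
coordinates equal to `u` and `b` the number equal to `ℓ`: the point `(x̃,ỹ)` satisfies a
valid core inequality exactly iff `(x^j, m(x^j))` satisfies it exactly for every
`j ∈ {p,…,n−b}` and `β_r = … = β_s`. -/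
theorem stmt15 (n : ℕ) (hn : 2 ≤ n) (ℓ u : ℝ) (hlu : ℓ < u) (c : ℕ → ℝ)
    (β₀ : ℝ) (β : Fin n → ℝ) (β' : ℝ)
    (hcore : IsCore n β β') (hvalid : IsValid n ℓ u c β₀ β β')
    (xt : Fin n → ℝ) (yt : ℝ) (hG : (xt, yt) ∈ Gset n ℓ u c)
    (hnot : ∀ k ≤ n, xt ≠ xpt n ℓ u k)
    (r s : Fin n)
    (hr : IsLeast {j : Fin n | xt j < u} r)
    (hs : IsGreatest {j : Fin n | ℓ < xt j} s)
    (p b : ℕ)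
    (hp : p = (Finset.univ.filter (fun j : Fin n => xt j = u)).card)
    (hb : b = (Finset.univ.filter (fun j : Fin n => xt j = ℓ)).card) :
    ExactAt n β₀ β β' (xt, yt) ↔
      ((∀ k, p ≤ k → k ≤ n - b → ExactAt n β₀ β β' (vtx n ℓ u c k)) ∧
        ∀ i j : Fin n, r ≤ i → i ≤ s → r ≤ j → j ≤ s → β i = β j) := by
  classical
  have hne : u ≠ ℓ := ne_of_gt hlu
  obtain ⟨hbox, hyt⟩ := hG
  have hboxj : ∀ j, ℓ ≤ xt j ∧ xt j ≤ u := fun j => Set.mem_Icc.mp (hbox j)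
  have hmono : Monotone β := hcore.2
  -- basic sets
  set U : Finset (Fin n) := univ.filter (fun j => xt j = u) with hU
  set Lset : Finset (Fin n) := univ.filter (fun j => xt j = ℓ) with hL
  set F : Finset (Fin n) := univ.filter (fun j => ℓ < xt j ∧ xt j < u) with hF
  -- h function abbreviation
  set h : (Fin n → ℝ) → ℝ := hfun n ℓ u c β₀ β β' with hh
  have haff : Affine1 n ℓ u h := hfun_affine n ℓ u c β₀ β β'
  -- validity at indicator points
  have hvalid_z : ∀ A : Finset (Fin n), 0 ≤ h (zp n ℓ u A) := by
    intro A
    have hmem : (zp n ℓ u A, mPoly n c (zp n ℓ u A)) ∈ Gset n ℓ u c := by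
      refine ⟨fun j => ?_, rfl⟩
      by_cases hj : j ∈ A <;> simp [zp, hj, Set.mem_Icc, le_of_lt hlu]
    have := hvalid _ (subset_convexHull ℝ _ hmem)
    simpa [ineqLhs, hh, hfun] using this
  -- boundary structure
  have hru : ∀ j : Fin n, j < r → xt j = u := by
    intro j hj
    have hnlt : ¬ xt j < u := fun hlt => absurd (hr.2 hlt) (not_le.mpr hj)
    exact le_antisymm (hboxj j).2 (not_lt.mp hnlt)
  have hsl : ∀ j : Fin n, s < j → xt j = ℓ := by
    intro j hj
    have hnlt : ¬ ℓ < xt j := fun hlt => absurd (hs.2 hlt) (not_le.mpr hj)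
    exact le_antisymm (not_lt.mp hnlt) (hboxj j).1
  have hrs : r ≤ s := by
    by_contra hcon
    have hsr : s < r := not_le.mp hcon
    refine hnot (r : ℕ) (le_of_lt r.isLt) ?_
    funext j
    by_cases hj : (j : ℕ) < (r : ℕ)
    · rw [xpt]; rw [if_pos hj]; exact hru j (Fin.lt_def.mpr hj)
    · rw [xpt]; rw [if_neg hj]
      refine hsl j (lt_of_lt_of_le hsr (Fin.le_def.mpr (not_lt.mp hj)))
  -- cardinality facts
  have hrp : (r : ℕ) ≤ p := by
    have hsub : (univ.filter fun j : Fin n => (j:ℕ) < (r:ℕ)) ⊆ U := by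
      intro j hj
      rw [Finset.mem_filter] at hj
      exact Finset.mem_filter.mpr ⟨Finset.mem_univ j, hru j (Fin.lt_def.mpr hj.2)⟩
    have := Finset.card_le_card hsub
    rw [card_filter_lt n (r:ℕ) (le_of_lt r.isLt)] at this
    omega
  have hns : n ≤ (s : ℕ) + 1 + b := by
    have hsub : (univ.filter fun j : Fin n => (s:ℕ) + 1 ≤ (j:ℕ)) ⊆ Lset := by
      intro j hj
      rw [Finset.mem_filter] at hj
      exact Finset.mem_filter.mpr ⟨Finset.mem_univ j, hsl j (Fin.lt_def.mpr hj.2)⟩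
    have := Finset.card_le_card hsub
    rw [card_filter_ge n ((s:ℕ)+1) s.isLt] at this
    omega
  have hpart : p + b + F.card = n := by
    have hUL : Disjoint U Lset := by
      rw [Finset.disjoint_left]
      intro j hj1 hj2
      rw [Finset.mem_filter] at hj1 hj2
      exact hne (hj1.2 ▸ hj2.2 ▸ rfl)
    have hULF : Disjoint (U ∪ Lset) F := by
      rw [Finset.disjoint_left]
      intro j hj1 hj2
      rw [Finset.mem_filter] at hj2
      rcases Finset.mem_union.mp hj1 with hj | hj <;> rw [Finset.mem_filter] at hj
      · exact absurd (hj.2 ▸ hj2.2.2) (lt_irrefl u)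
      · exact absurd (hj.2 ▸ hj2.2.1) (lt_irrefl ℓ)
    have hcover : U ∪ Lset ∪ F = univ := by
      apply Finset.eq_univ_of_forall
      intro j
      rw [Finset.mem_union, Finset.mem_union]
      rcases eq_or_lt_of_le (hboxj j).1 with h1 | h1
      · exact Or.inl (Or.inr (Finset.mem_filter.mpr ⟨Finset.mem_univ j, h1.symm⟩))
      rcases eq_or_lt_of_le (hboxj j).2 with h2 | h2
      · exact Or.inl (Or.inl (Finset.mem_filter.mpr ⟨Finset.mem_univ j, h2⟩))
      · exact Or.inr (Finset.mem_filter.mpr ⟨Finset.mem_univ j, h1, h2⟩)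
    have := Finset.card_union_of_disjoint hULF
    rw [hcover, Finset.card_union_of_disjoint hUL, Finset.card_univ, Fintype.card_fin] at this
    omega
  have hpcard : U.card = p := hp.symm
  -- corner identification
  have hcrn : ∀ S ⊆ F, crn n ℓ u F S xt = zp n ℓ u (U ∪ S) := by
    intro S hS
    funext j
    by_cases hj : j ∈ F
    · have hjF := (Finset.mem_filter.mp hj).2
      have hjU : j ∉ U := fun hmem => absurd ((Finset.mem_filter.mp hmem).2 ▸ hjF.2) (lt_irrefl u)
      rw [crn, if_pos hj, zp]
      by_cases hjS : j ∈ S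
      · rw [if_pos hjS, if_pos (Finset.mem_union_right U hjS)]
      · rw [if_neg hjS, if_neg (fun hmem => (Finset.mem_union.mp hmem).elim hjU hjS)]
    · rw [crn, if_neg hj, zp]
      by_cases hju : xt j = u
      · rw [if_pos (Finset.mem_union_left S (Finset.mem_filter.mpr ⟨Finset.mem_univ j, hju⟩)), hju]
      · have hjl : xt j = ℓ := by
          rcases eq_or_lt_of_le (hboxj j).1 with h1 | h1
          · exact h1.symm
          rcases eq_or_lt_of_le (hboxj j).2 with h2 | h2
          · exact absurd h2 hju
          · exact absurd (Finset.mem_filter.mpr ⟨Finset.mem_univ j, h1, h2⟩) hj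
        have hjU : j ∉ U := fun hmem => hju (Finset.mem_filter.mp hmem).2
        have hjS : j ∉ S := fun hmem => hj (hS hmem)
        rw [if_neg (fun hmem => (Finset.mem_union.mp hmem).elim hjU hjS), hjl]
  -- members of U ∪ S are ≤ s, etc.
  have hUS_le_s : ∀ (S : Finset (Fin n)), S ⊆ F → ∀ j ∈ U ∪ S, j ≤ s := by
    intro S hS j hj
    rcases Finset.mem_union.mp hj with hj | hj
    · exact hs.2 (show ℓ < xt j by rw [(Finset.mem_filter.mp hj).2]; exact hlu)
    · exact hs.2 (Finset.mem_filter.mp (hS hj)).2.1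
  have hxpt_zp : ∀ k : ℕ, xpt n ℓ u k = zp n ℓ u (univ.filter fun j : Fin n => (j:ℕ) < k) := by
    intro k
    funext j
    simp [xpt, zp]
  -- key transfer: corner (U ∪ S) has same h-value as the vertex with p + |S| u's,
  -- assuming β is constant on [r,s]
  have hkey : (∀ i j : Fin n, r ≤ i → i ≤ s → r ≤ j → j ≤ s → β i = β j) →
      ∀ S ⊆ F, h (zp n ℓ u (U ∪ S)) =
        h (zp n ℓ u (univ.filter fun j : Fin n => (j:ℕ) < (p + S.card))) := by
    intro hβc S hS
    set k := p + S.card with hk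
    have hSU : Disjoint U S := by
      rw [Finset.disjoint_left]
      intro j hj1 hj2
      have h1 := (Finset.mem_filter.mp hj1).2
      have h2 := (Finset.mem_filter.mp (hS hj2)).2.2
      exact absurd (h1 ▸ h2) (lt_irrefl u)
    have hScard : S.card ≤ F.card := Finset.card_le_card hS
    have hkn : k ≤ n := by omega
    have hknb : k ≤ n - b := by omega
    have hAcard : (U ∪ S).card = k := by
      rw [Finset.card_union_of_disjoint hSU, hpcard]
    have hBcard : (univ.filter fun j : Fin n => (j:ℕ) < k).card = k := card_filter_lt n k hkn
    have hbr : ∀ i : Fin n, r ≤ i → i ≤ s → β i = β r :=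
      fun i h1 h2 => hβc i r h1 h2 (le_refl r) hrs
    refine hfun_transfer n ℓ u c β₀ β β' _ _ (by rw [hAcard, hBcard]) (β r) ?_ ?_
    · intro j hj
      obtain ⟨hjA, hjB⟩ := Finset.mem_sdiff.mp hj
      have hjk : ¬ (j:ℕ) < k := fun hlt => hjB (Finset.mem_filter.mpr ⟨Finset.mem_univ j, hlt⟩)
      have hjr : r ≤ j := by
        by_contra hcon
        have : (j:ℕ) < (r:ℕ) := Fin.lt_def.mp (not_le.mp hcon)
        omega
      exact hbr j hjr (hUS_le_s S hS j hjA)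
    · intro j hj
      obtain ⟨hjB, hjA⟩ := Finset.mem_sdiff.mp hj
      have hjk : (j:ℕ) < k := (Finset.mem_filter.mp hjB).2
      have hjr : r ≤ j := by
        by_contra hcon
        have hju : xt j = u := hru j (not_le.mp hcon)
        exact hjA (Finset.mem_union_left S (Finset.mem_filter.mpr ⟨Finset.mem_univ j, hju⟩))
      have hjs : j ≤ s := Fin.le_def.mpr (by omega)
      exact hbr j hjr hjs
  -- relating ExactAt to h
  have hex_iff : ExactAt n β₀ β β' (xt, yt) ↔ h xt = 0 := by
    rw [hh]
    unfold ExactAt ineqLhs hfun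
    rw [hyt]
  have hvtx_iff : ∀ k : ℕ, ExactAt n β₀ β β' (vtx n ℓ u c k) ↔
      h (zp n ℓ u (univ.filter fun j : Fin n => (j:ℕ) < k)) = 0 := by
    intro k
    rw [hh, ← hxpt_zp]
    unfold ExactAt ineqLhs hfun vtx mval
    simp
  have hFmem : ∀ i ∈ F, ℓ < xt i ∧ xt i < u := fun i hi => (Finset.mem_filter.mp hi).2
  constructor
  · -- forward direction
    intro hex
    have hx0 : h xt = 0 := hex_iff.mp hex
    have hcnn : ∀ S ⊆ F, 0 ≤ h (crn n ℓ u F S xt) := by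
      intro S hS
      rw [hcrn S hS]
      exact hvalid_z _
    have hz0 : ∀ S ⊆ F, h (zp n ℓ u (U ∪ S)) = 0 := by
      intro S hS
      have := expand_pos n ℓ u hlu h haff F xt hFmem hcnn hx0 S hS
      rwa [hcrn S hS] at this
    -- first: β r = β s
    have hβsr : β s ≤ β r := by
      rcases eq_or_lt_of_le hrs with heq | hlt
      · rw [heq]
      have hrU : r ∉ U := fun hmem => absurd ((Finset.mem_filter.mp hmem).2 ▸ hr.1) (lt_irrefl u)
      -- find exact corner A with s ∈ A, r ∉ A
      obtain ⟨A, hA0, hsA, hrA⟩ :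
          ∃ A : Finset (Fin n), h (zp n ℓ u A) = 0 ∧ s ∈ A ∧ r ∉ A := by
        by_cases hsu : xt s = u
        · exact ⟨U, by simpa using hz0 ∅ (Finset.empty_subset F),
            Finset.mem_filter.mpr ⟨Finset.mem_univ s, hsu⟩, hrU⟩
        · have hsF : s ∈ F := Finset.mem_filter.mpr
            ⟨Finset.mem_univ s, hs.1, lt_of_le_of_ne (hboxj s).2 hsu⟩
          refine ⟨U ∪ {s}, hz0 {s} (Finset.singleton_subset_iff.mpr hsF),
            Finset.mem_union_right U (Finset.mem_singleton_self s), ?_⟩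
          intro hmem
          rcases Finset.mem_union.mp hmem with hm | hm
          · exact hrU hm
          · exact absurd (Finset.mem_singleton.mp hm) (ne_of_lt hlt)
      have hswap := hfun_swap n ℓ u c β₀ β β' r s A hsA hrA
      have hnn := hvalid_z (insert r (A.erase s))
      rw [hh] at *
      nlinarith [hswap, hnn, hA0]
    have hβc : ∀ i j : Fin n, r ≤ i → i ≤ s → r ≤ j → j ≤ s → β i = β j := by
      intro i j h1 h2 h3 h4
      have hi : β i = β r := le_antisymm (by calc β i ≤ β s := hmono h2
                                                _ ≤ β r := hβsr) (hmono h1)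
      have hj : β j = β r := le_antisymm (by calc β j ≤ β s := hmono h4
                                                _ ≤ β r := hβsr) (hmono h3)
      rw [hi, hj]
    refine ⟨?_, hβc⟩
    intro k hpk hknb
    rw [hvtx_iff k]
    obtain ⟨S, hSF, hScard⟩ := Finset.exists_subset_card_eq (s := F) (n := k - p) (by omega)
    have := hkey hβc S hSF
    rw [hz0 S hSF] at this
    rw [hScard] at this
    have hkk : p + (k - p) = k := by omega
    rw [hkk] at this
    exact this.symm
  · -- backward direction
    rintro ⟨hvert, hβc⟩
    rw [hex_iff]
    refine expand_zero n ℓ u hne h haff F xt ?_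
    intro S hS
    rw [hcrn S hS]
    have hScard : S.card ≤ F.card := Finset.card_le_card hS
    rw [hkey hβc S hS]
    rw [← hvtx_iff (p + S.card)]
    exact hvert (p + S.card) (by omega) (by omega)
end

section
/- If ℓ ≥ 0 and c_j ≥ 0 for all j ∈ {2,…,n}, then m is supermodular over the vertices of X, i.e., m(x^k) − m(x^{k−1}) ≤ m(x^{k+1}) − m(x^k) for all k ∈ {1,…,n−1}. -/
open Finset

/-- `m` is supermodular over the vertices of `X`:
`m(x^k) − m(x^{k−1}) ≤ m(x^{k+1}) − m(x^k)` for `k ∈ {1,…,n−1}`. -/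
def Supermod (n : ℕ) (ℓ u : ℝ) (c : ℕ → ℝ) : Prop :=
  ∀ k, 1 ≤ k → k ≤ n - 1 →
    mval n ℓ u c k - mval n ℓ u c (k - 1) ≤ mval n ℓ u c (k + 1) - mval n ℓ u c k

noncomputable def Esym (n m : ℕ) (s : Finset (Fin n)) (f : Fin n → ℝ) : ℝ :=
  ∑ J ∈ s.powersetCard m, ∏ j ∈ J, f j

lemma Esym_congr {n m : ℕ} {s : Finset (Fin n)} {f g : Fin n → ℝ}
    (h : ∀ j ∈ s, f j = g j) : Esym n m s f = Esym n m s g := by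
  refine Finset.sum_congr rfl fun J hJ => Finset.prod_congr rfl fun j hj => ?_
  exact h j ((Finset.mem_powersetCard.mp hJ).1 hj)

lemma Esym_nonneg {n m : ℕ} {s : Finset (Fin n)} {f : Fin n → ℝ}
    (hf : ∀ j ∈ s, 0 ≤ f j) : 0 ≤ Esym n m s f := by
  refine Finset.sum_nonneg fun J hJ => Finset.prod_nonneg fun j hj => ?_
  exact hf j ((Finset.mem_powersetCard.mp hJ).1 hj)

lemma Esym_mono {n m : ℕ} {s : Finset (Fin n)} {f g : Fin n → ℝ}
    (hf : ∀ j ∈ s, 0 ≤ f j) (hfg : ∀ j ∈ s, f j ≤ g j) :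
    Esym n m s f ≤ Esym n m s g := by
  refine Finset.sum_le_sum fun J hJ => Finset.prod_le_prod
    (fun j hj => hf j ((Finset.mem_powersetCard.mp hJ).1 hj))
    (fun j hj => hfg j ((Finset.mem_powersetCard.mp hJ).1 hj))

lemma Esym_insert {n m : ℕ} {t : Fin n} {s : Finset (Fin n)} (ht : t ∉ s) (f : Fin n → ℝ) :
    Esym n (m + 1) (insert t s) f = Esym n (m + 1) s f + f t * Esym n m s f := by
  unfold Esym
  rw [Finset.powersetCard_succ_insert ht]
  rw [Finset.sum_union]
  · congr 1
    rw [Finset.sum_image]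
    · rw [Finset.mul_sum]
      refine Finset.sum_congr rfl fun J hJ => ?_
      have htJ : t ∉ J := fun h => ht ((Finset.mem_powersetCard.mp hJ).1 h)
      rw [Finset.prod_insert htJ]
    · intro J hJ K hK hJK
      have htJ : t ∉ J := fun h => ht ((Finset.mem_powersetCard.mp hJ).1 h)
      have htK : t ∉ K := fun h => ht ((Finset.mem_powersetCard.mp hK).1 h)
      have : (insert t J).erase t = (insert t K).erase t := by rw [hJK]
      rwa [Finset.erase_insert htJ, Finset.erase_insert htK] at this
  · rw [Finset.disjoint_left]
    intro J hJ hJ'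
    obtain ⟨K, hK, rfl⟩ := Finset.mem_image.mp hJ'
    have : t ∉ insert t K := fun h => (Finset.mem_powersetCard.mp hJ).1 h |> ht
    exact this (Finset.mem_insert_self t K)

lemma Esym_map {n m : ℕ} (s : Finset (Fin n)) (e : Fin n ↪ Fin n) (f : Fin n → ℝ) :
    Esym n m (s.map e) f = Esym n m s (f ∘ e) := by
  unfold Esym
  rw [Finset.powersetCard_map, Finset.sum_map]
  refine Finset.sum_congr rfl fun J _ => ?_
  show ∏ j ∈ Finset.mapEmbedding e J, f j = _
  rw [Finset.mapEmbedding_apply, Finset.prod_map]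
  rfl

lemma mPoly_update (n : ℕ) (c : ℕ → ℝ) (x : Fin n → ℝ) (t : Fin n) (v : ℝ) :
    mPoly n c (Function.update x t v)
      = (∑ i ∈ Finset.Icc 2 n, c i * Esym n i (univ.erase t) x)
        + v * ∑ i ∈ Finset.Icc 2 n, c i * Esym n (i - 1) (univ.erase t) x := by
  unfold mPoly
  rw [Finset.mul_sum, ← Finset.sum_add_distrib]
  refine Finset.sum_congr rfl fun i hi => ?_
  obtain ⟨hi2, hin⟩ := Finset.mem_Icc.mp hi
  obtain ⟨m, rfl⟩ : ∃ m, i = m + 1 := ⟨i - 1, by omega⟩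
  have ht : t ∉ univ.erase t := Finset.notMem_erase _ _
  have huniv : (univ : Finset (Fin n)) = insert t (univ.erase t) :=
    (Finset.insert_erase (Finset.mem_univ t)).symm
  have hupd : ∀ j ∈ univ.erase t, Function.update x t v j = x j := by
    intro j hj
    exact Function.update_of_ne (Finset.mem_erase.mp hj).1 v x
  have h1 : ∑ J ∈ Finset.powersetCard (m + 1) (univ : Finset (Fin n)),
      ∏ j ∈ J, Function.update x t v j
      = Esym n (m + 1) (univ.erase t) x + v * Esym n m (univ.erase t) x := by
    have := Esym_insert (m := m) ht (Function.update x t v)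
    rw [← huniv] at this
    rw [show (∑ J ∈ Finset.powersetCard (m + 1) (univ : Finset (Fin n)),
        ∏ j ∈ J, Function.update x t v j) = Esym n (m + 1) univ (Function.update x t v) from rfl,
      this, Esym_congr hupd, Esym_congr (m := m) hupd, Function.update_self]
  rw [h1]
  simp only [Nat.add_sub_cancel]
  ring

lemma xpt_succ (n : ℕ) (ℓ u : ℝ) (k : ℕ) (hk : k < n) :
    xpt n ℓ u (k + 1) = Function.update (xpt n ℓ u k) ⟨k, hk⟩ u := by
  funext j
  by_cases hj : j = ⟨k, hk⟩
  · subst hj; simp [xpt, Function.update_self]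
  · have hjk : (j : ℕ) ≠ k := fun h => hj (Fin.ext h)
    rw [Function.update_of_ne hj]
    simp only [xpt]
    have : (j : ℕ) < k + 1 ↔ (j : ℕ) < k := by omega
    rw [if_congr this rfl rfl]

lemma xpt_self (n : ℕ) (ℓ u : ℝ) (k : ℕ) (hk : k < n) :
    xpt n ℓ u k = Function.update (xpt n ℓ u k) ⟨k, hk⟩ ℓ := by
  have : xpt n ℓ u k ⟨k, hk⟩ = ℓ := by simp [xpt]
  conv_lhs => rw [← Function.update_eq_self ⟨k, hk⟩ (xpt n ℓ u k), this]

lemma mval_diff (n : ℕ) (ℓ u : ℝ) (c : ℕ → ℝ) (k : ℕ) (hk : k < n) :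
    mval n ℓ u c (k + 1) - mval n ℓ u c k
      = (u - ℓ) * ∑ i ∈ Finset.Icc 2 n, c i * Esym n (i - 1) (univ.erase ⟨k, hk⟩) (xpt n ℓ u k) := by
  have h1 : mval n ℓ u c (k + 1)
      = (∑ i ∈ Finset.Icc 2 n, c i * Esym n i (univ.erase ⟨k, hk⟩) (xpt n ℓ u k))
        + u * ∑ i ∈ Finset.Icc 2 n, c i * Esym n (i - 1) (univ.erase ⟨k, hk⟩) (xpt n ℓ u k) := by
    unfold mval
    rw [xpt_succ n ℓ u k hk, mPoly_update]
  have h2 : mval n ℓ u c k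
      = (∑ i ∈ Finset.Icc 2 n, c i * Esym n i (univ.erase ⟨k, hk⟩) (xpt n ℓ u k))
        + ℓ * ∑ i ∈ Finset.Icc 2 n, c i * Esym n (i - 1) (univ.erase ⟨k, hk⟩) (xpt n ℓ u k) := by
    conv_lhs => unfold mval; rw [xpt_self n ℓ u k hk]
    rw [mPoly_update]
  rw [h1, h2]
  ring

lemma key_compare (n k : ℕ) (ℓ u : ℝ) (hl : 0 ≤ ℓ) (hlu : ℓ ≤ u)
    (hk1 : 1 ≤ k) (hkn : k < n) (h1 : k - 1 < n) (m : ℕ) :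
    Esym n m (univ.erase ⟨k - 1, h1⟩) (xpt n ℓ u (k - 1))
      ≤ Esym n m (univ.erase ⟨k, hkn⟩) (xpt n ℓ u k) := by
  set a : Fin n := ⟨k - 1, h1⟩ with ha
  set b : Fin n := ⟨k, hkn⟩ with hb
  have hab : a ≠ b := by
    intro h
    have := congrArg Fin.val h
    simp only [ha, hb] at this
    omega
  set σ := Equiv.swap a b with hσ
  have hmap : (univ.erase a).map σ.toEmbedding = univ.erase b := by
    rw [Finset.map_erase, Finset.map_univ_equiv]
    congr 1
    exact Equiv.swap_apply_left a b
  have hre : Esym n m (univ.erase b) (xpt n ℓ u k)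
      = Esym n m (univ.erase a) (xpt n ℓ u k ∘ σ) := by
    rw [← hmap, Esym_map]
    rfl
  rw [hre]
  refine Esym_mono ?_ ?_
  · intro j _
    simp only [xpt]
    split <;> [linarith; exact hl]
  · intro j hj
    have hja : j ≠ a := (Finset.mem_erase.mp hj).1
    by_cases hjb : j = b
    · subst hjb
      have hσb : σ b = a := Equiv.swap_apply_right a b
      simp only [Function.comp_apply, hσb]
      simp only [xpt, ha, hb]
      have h1' : ¬ ((k : ℕ) < k - 1) := by omega
      have h2' : ((k - 1 : ℕ) < k) := by omega
      rw [if_neg h1', if_pos h2']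
      exact hlu
    · have hσj : σ j = j := Equiv.swap_apply_of_ne_of_ne hja hjb
      simp only [Function.comp_apply, hσj, xpt]
      have hjk1 : (j : ℕ) ≠ k - 1 := fun h => hja (Fin.ext h)
      have : ((j : ℕ) < k - 1) ↔ ((j : ℕ) < k) := by omega
      rw [if_congr this rfl rfl]


/-- If `ℓ ≥ 0` and all coefficients `c_j ≥ 0` for `j ∈ {2,…,n}`, then
`m` is supermodular over the vertices of `X`. -/
theorem stmt17 (n : ℕ) (hn : 2 ≤ n) (ℓ u : ℝ) (hlu : ℓ < u) (c : ℕ → ℝ)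
    (hl : 0 ≤ ℓ) (hc : ∀ j, 2 ≤ j → j ≤ n → 0 ≤ c j) :
    Supermod n ℓ u c := by
  unfold Supermod
  intro k hk1 hkn'
  have hkn : k < n := by omega
  have h1 : k - 1 < n := by omega
  have e1 := mval_diff n ℓ u c (k - 1) h1
  rw [show k - 1 + 1 = k from by omega] at e1
  rw [e1, mval_diff n ℓ u c k hkn]
  refine mul_le_mul_of_nonneg_left ?_ (by linarith)
  refine Finset.sum_le_sum fun i hi => ?_
  obtain ⟨hi2, hin⟩ := Finset.mem_Icc.mp hi
  exact mul_le_mul_of_nonneg_left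
    (key_compare n k ℓ u hl hlu.le hk1 hkn h1 (i - 1)) (hc i hi2 hin)
end

section
/- Suppose ℓ = 0 and u = 1 (so X = [0,1]^n). Then m is supermodular over the vertices of X if and only if Σ_{d=2}^{k+1} binom(k−1, d−2) · c_d ≥ 0 for every k ∈ {1,…,n−1} (with the convention binom(0,0) = 1). -/
open Finset

lemma count_aux (n k i : ℕ) (hk : k ≤ n) :
    ∑ J ∈ Finset.powersetCard i (Finset.univ : Finset (Fin n)),
      ∏ j ∈ J, (if (j : ℕ) < k then (1:ℝ) else 0) = (k.choose i : ℝ) := by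
  have hS : (Finset.univ.filter (fun j : Fin n => (j : ℕ) < k)).card = k := by
    rw [show (Finset.univ.filter fun j : Fin n => (j : ℕ) < k)
        = Finset.map (Fin.castLEEmb hk) Finset.univ from ?_]
    · simp
    · ext j
      simp only [Finset.mem_filter, Finset.mem_map, Finset.mem_univ, true_and,
        Fin.castLEEmb_apply]
      constructor
      · intro hj; exact ⟨⟨j, hj⟩, by ext; rfl⟩
      · rintro ⟨a, rfl⟩; exact lt_of_lt_of_le a.isLt le_rfl |>.trans_le le_rfl |> fun _ => a.isLt
  have h1 : ∀ J ∈ Finset.powersetCard i (Finset.univ : Finset (Fin n)),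
      (∏ j ∈ J, (if (j : ℕ) < k then (1:ℝ) else 0))
        = if J ⊆ Finset.univ.filter (fun j : Fin n => (j : ℕ) < k) then (1:ℝ) else 0 := by
    intro J _
    rw [Finset.prod_boole]
    congr 1
    simp [Finset.subset_iff]
  rw [Finset.sum_congr rfl h1, Finset.sum_boole]
  have h2 : Finset.filter (fun J => J ⊆ Finset.univ.filter (fun j : Fin n => (j : ℕ) < k))
      (Finset.powersetCard i (Finset.univ : Finset (Fin n)))
      = Finset.powersetCard i (Finset.univ.filter (fun j : Fin n => (j : ℕ) < k)) := by
    ext J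
    simp only [Finset.mem_filter, Finset.mem_powersetCard, Finset.subset_univ, true_and]
    tauto
  rw [h2, Finset.card_powersetCard, hS]

lemma mval_formula (n : ℕ) (c : ℕ → ℝ) (k : ℕ) (hk : k ≤ n) :
    mval n 0 1 c k = ∑ i ∈ Finset.Icc 2 n, c i * (k.choose i : ℝ) := by
  unfold mval mPoly xpt
  refine Finset.sum_congr rfl fun i _ => ?_
  rw [count_aux n k i hk]

lemma key_lemma (n : ℕ) (c : ℕ → ℝ) (m : ℕ) (hm : m + 2 ≤ n) :
    mval n 0 1 c (m+2) - mval n 0 1 c (m+1) - (mval n 0 1 c (m+1) - mval n 0 1 c m)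
      = ∑ d ∈ Finset.Icc 2 (m+2), ((m.choose (d-2) : ℕ) : ℝ) * c d := by
  rw [mval_formula n c (m+2) hm, mval_formula n c (m+1) (by omega),
    mval_formula n c m (by omega)]
  rw [show ∑ d ∈ Finset.Icc 2 (m+2), ((m.choose (d-2) : ℕ) : ℝ) * c d
      = ∑ d ∈ Finset.Icc 2 n, ((m.choose (d-2) : ℕ) : ℝ) * c d from ?_]
  · rw [← Finset.sum_sub_distrib, ← Finset.sum_sub_distrib, ← Finset.sum_sub_distrib]
    refine Finset.sum_congr rfl fun i hi => ?_
    obtain ⟨hi2, _⟩ := Finset.mem_Icc.mp hi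
    obtain ⟨j, rfl⟩ : ∃ j, i = j + 2 := ⟨i - 2, by omega⟩
    have hch : (m+2).choose (j+2) + m.choose (j+2)
        = (m+1).choose (j+2) + (m+1).choose (j+2) + m.choose j := by
      simp [Nat.choose_succ_succ (m+1), Nat.choose_succ_succ m]
      ring
    have : ((m+2).choose (j+2) : ℝ) + (m.choose (j+2) : ℝ)
        = ((m+1).choose (j+2) : ℝ) + ((m+1).choose (j+2) : ℝ) + (m.choose j : ℝ) := by
      exact_mod_cast congrArg (Nat.cast : ℕ → ℝ) hch
    have hj2 : j + 2 - 2 = j := by omega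
    rw [hj2]
    linear_combination c (j+2) * this
  · refine Finset.sum_subset (Finset.Icc_subset_Icc_right hm) fun d hd hnd => ?_
    obtain ⟨hd2, hdn⟩ := Finset.mem_Icc.mp hd
    have : m < d - 2 := by
      simp only [Finset.mem_Icc, not_and, not_le] at hnd
      omega
    rw [Nat.choose_eq_zero_of_lt this]
    simp

/-- Over the unit hypercube (`ℓ = 0`, `u = 1`), `m` is supermodular
over the vertices of `X` iff `∑_{d=2}^{k+1} C(k−1, d−2) c_d ≥ 0` for all
`k ∈ {1,…,n−1}`. -/
theorem stmt18 (n : ℕ) (hn : 2 ≤ n) (ℓ u : ℝ) (hlu : ℓ < u) (c : ℕ → ℝ)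
    (hℓ : ℓ = 0) (hu : u = 1) :
    Supermod n ℓ u c ↔
      ∀ k, 1 ≤ k → k ≤ n - 1 →
        0 ≤ ∑ d ∈ Finset.Icc 2 (k + 1), ((k - 1).choose (d - 2) : ℝ) * c d := by
  subst hℓ hu
  constructor
  · intro h k hk1 hk2
    obtain ⟨m, rfl⟩ : ∃ m, k = m + 1 := ⟨k - 1, by omega⟩
    have := h (m+1) (by omega) hk2
    have hkey := key_lemma n c m (by omega)
    simp only [Nat.add_sub_cancel] at this ⊢
    linarith [hkey, this]
  · intro h k hk1 hk2
    obtain ⟨m, rfl⟩ : ∃ m, k = m + 1 := ⟨k - 1, by omega⟩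
    have := h (m+1) (by omega) hk2
    have hkey := key_lemma n c m (by omega)
    simp only [Nat.add_sub_cancel] at this ⊢
    linarith [hkey, this]
end
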